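/- Let A be a commutative associative unital algebra over a field of characteristic 0 with a derivation D such that A has no nonzero proper D-invariant ideals and D ≠ 0. Then the Jordan superalgebra J_1(A,D) = A ⊕ ηA with product a∘b = ab, a∘(ηb) = η(ab), (ηa)∘(ηb) = aD(b) - D(a)b is simple (has no nonzero proper graded two-sided ideals). -/

import Mathlib

/-- The product of the Jordan superalgebra `J_1(A,D) = A ⊕ ηA`:
`a∘b = ab`, `a∘(ηb) = η(ab)`, `(ηa)∘(ηb) = aD(b) - D(a)b`. -/
def jmulOne {F A : Type*} [Field F] [CommRing A] [Algebra F A]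
    (D : A →ₗ[F] A) (u v : A × A) : A × A :=
  (u.1 * v.1 + (u.2 * D v.2 - D u.2 * v.2), u.1 * v.2 + u.2 * v.1)

/-- If `A` is a commutative associative unital algebra over a field of
characteristic 0 with a nonzero derivation `D` such that `A` has no nonzero proper
`D`-invariant ideals, then `J_1(A,D)` is simple: it has no nonzero proper graded
two-sided ideals. -/
theorem stmt_7 (F : Type*) [Field F] [CharZero F]
    (A : Type*) [CommRing A] [Algebra F A]
    (D : A →ₗ[F] A) (hD : ∀ a b : A, D (a * b) = a * D b + D a * b)
    (hDne : D ≠ 0)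
    (hsimple : ∀ I : Ideal A, (∀ a ∈ I, D a ∈ I) → I = ⊥ ∨ I = ⊤)
    (I : Submodule F (A × A))
    (hgraded : ∀ u ∈ I, (u.1, (0 : A)) ∈ I ∧ ((0 : A), u.2) ∈ I)
    (hideal : ∀ v : A × A, ∀ u ∈ I, jmulOne D v u ∈ I ∧ jmulOne D u v ∈ I) :
    I = ⊥ ∨ I = ⊤ := by
  have hD1 : D 1 = 0 := by
    have h := hD 1 1
    rw [one_mul, one_mul, mul_one] at h
    have h2 : D 1 + 0 = D 1 + D 1 := by simpa using h
    exact (add_left_cancel h2).symm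
  -- even part
  have smul0 : ∀ c a : A, (a, (0:A)) ∈ I → (c * a, (0:A)) ∈ I := by
    intro c a ha
    have h := (hideal (c, 0) (a, 0) ha).1
    simpa [jmulOne, hD1] using h
  have smul1 : ∀ c b : A, ((0:A), b) ∈ I → ((0:A), c * b) ∈ I := by
    intro c b hb
    have h := (hideal (c, 0) (0, b) hb).1
    simpa [jmulOne, hD1] using h
  let I0 : Ideal A :=
    { carrier := {a | (a, (0:A)) ∈ I}
      add_mem' := fun {a b} ha hb => by
        have := I.add_mem ha hb
        simpa using this
      zero_mem' := by exact I.zero_mem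
      smul_mem' := fun c a ha => by
        simpa [smul_eq_mul] using smul0 c a ha }
  let I1 : Ideal A :=
    { carrier := {b | ((0:A), b) ∈ I}
      add_mem' := fun {a b} ha hb => by
        have := I.add_mem ha hb
        simpa using this
      zero_mem' := by exact I.zero_mem
      smul_mem' := fun c b hb => by
        simpa [smul_eq_mul] using smul1 c b hb }
  have hI0I1 : ∀ a ∈ I0, a ∈ I1 := by
    intro a ha
    have h := (hideal (0, 1) (a, 0) ha).1
    simpa [jmulOne, hD1, I1] using h
  have hDI1 : ∀ b ∈ I1, D b ∈ I0 := by
    intro b hb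
    have h := (hideal (0, 1) (0, b) hb).1
    simpa [jmulOne, hD1, I0] using h
  have hDI0 : ∀ a ∈ I0, D a ∈ I0 := fun a ha => hDI1 a (hI0I1 a ha)
  have hDI1' : ∀ b ∈ I1, D b ∈ I1 := fun b hb => hI0I1 (D b) (hDI1 b hb)
  rcases hsimple I1 hDI1' with h1 | h1
  · left
    ext u
    simp only [Submodule.mem_bot]
    constructor
    · intro hu
      obtain ⟨h0, hodd⟩ := hgraded u hu
      have hu1 : u.1 ∈ I1 := hI0I1 u.1 h0
      have hu2 : u.2 ∈ I1 := hodd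
      rw [h1] at hu1 hu2
      have e1 : u.1 = 0 := hu1
      have e2 : u.2 = 0 := hu2
      exact Prod.ext e1 e2
    · rintro rfl; exact I.zero_mem
  · -- I1 = ⊤, so (0,1) ∈ I, hence D c ∈ I0 for all c, so I0 ≠ ⊥
    have h01 : ((0:A), (1:A)) ∈ I := by
      have : (1:A) ∈ I1 := h1 ▸ Submodule.mem_top
      exact this
    have hDc : ∀ c : A, D c ∈ I0 := by
      intro c
      have h := (hideal (0, c) (0, 1) h01).1
      have hmem : (-(D c), (0:A)) ∈ I := by
        simpa [jmulOne, hD1] using h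
      have : -(D c) ∈ I0 := hmem
      simpa using I0.neg_mem this
    have hI0ne : I0 ≠ ⊥ := by
      intro hbot
      apply hDne
      ext c
      have := hDc c
      rw [hbot] at this
      simpa using this
    rcases hsimple I0 hDI0 with h0 | h0
    · exact absurd h0 hI0ne
    · right
      ext u
      simp only [Submodule.mem_top, iff_true]
      have ha : (u.1, (0:A)) ∈ I := by
        have : u.1 ∈ I0 := h0 ▸ Submodule.mem_top
        exact this
      have hb : ((0:A), u.2) ∈ I := by
        have : u.2 ∈ I1 := h1 ▸ Submodule.mem_top
        exact this
      have := I.add_mem ha hb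
      simpa using this
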